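/- arXiv:2310.19191 — 2 statements merged into one kernel-verified Lean document; each statement's English description precedes it below -/
import Mathlib

section
/- Let L_δ be a family of bounded operators on Banach spaces B_s ⊆ B_w with ‖(L_δ − L₀)f‖_w ≤ Cδ‖f‖_s, and suppose each v_δ ∈ B_s satisfies L_δ v_δ = λ_δ v_δ with λ_δ → λ₀, ‖v_δ − v₀‖_s → 0, and (v_δ − v₀)/δ converging in B_w, and (L_δ − L₀)v₀/δ converging in B_w. Then the map δ ↦ λ_δ is differentiable at δ = 0. -/
open Filter Topology

/-- Differentiability of a simple eigenvalue family: if `‖(L_δ - L₀)f‖_w ≤ Cδ‖f‖_s`,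
the eigenvectors `v_δ ∈ B_s` (with eigenvalues `λ_δ → λ₀`) converge in `B_s`,
`(v_δ - v₀)/δ` converges in `B_w`, and `(L_δ - L₀)v₀/δ` converges in `B_w`, then
`δ ↦ λ_δ` is differentiable at `δ = 0` (from the right). -/
theorem eigenvalue_differentiable
    {Bs Bw : Type*} [NormedAddCommGroup Bs] [NormedSpace ℂ Bs]
    [NormedAddCommGroup Bw] [NormedSpace ℂ Bw]
    (ι : Bs →L[ℂ] Bw) (hinj : Function.Injective ι) (hnorm : ∀ f : Bs, ‖ι f‖ ≤ ‖f‖)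
    (δbar C : ℝ) (hδbar : 0 < δbar)
    (Lw : ℝ → Bw →L[ℂ] Bw)
    (hpert : ∀ δ ∈ Set.Ico (0:ℝ) δbar, ∀ f : Bs,
      ‖Lw δ (ι f) - Lw 0 (ι f)‖ ≤ C * δ * ‖f‖)
    (v : ℝ → Bs) (lam : ℝ → ℂ) (hv0 : v 0 ≠ 0)
    (heig : ∀ δ ∈ Set.Ico (0:ℝ) δbar, Lw δ (ι (v δ)) = lam δ • ι (v δ))
    (hlam : Tendsto lam (𝓝[Set.Ioo 0 δbar] 0) (𝓝 (lam 0)))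
    (hvconv : Tendsto (fun δ => ‖v δ - v 0‖) (𝓝[Set.Ioo 0 δbar] 0) (𝓝 0))
    (hu : ∃ u : Bw, Tendsto (fun δ : ℝ => ((δ : ℂ))⁻¹ • (ι (v δ) - ι (v 0)))
      (𝓝[Set.Ioo 0 δbar] 0) (𝓝 u))
    (hz : ∃ z : Bw, Tendsto (fun δ : ℝ => ((δ : ℂ))⁻¹ • (Lw δ (ι (v 0)) - Lw 0 (ι (v 0))))
      (𝓝[Set.Ioo 0 δbar] 0) (𝓝 z)) :
    ∃ c : ℂ, Tendsto (fun δ : ℝ => (lam δ - lam 0) / (δ : ℂ))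
      (𝓝[Set.Ioo 0 δbar] 0) (𝓝 c) := by
  obtain ⟨u, hu⟩ := hu
  obtain ⟨z, hz⟩ := hz
  have hv0' : ι (v 0) ≠ 0 := fun h => hv0 (hinj (h.trans (map_zero ι).symm))
  obtain ⟨φ, hφ1, hφv⟩ := exists_dual_vector ℂ (ι (v 0)) (norm_ne_zero_iff.mpr hv0')
  set w : ℝ → Bw := fun δ => ((δ : ℂ))⁻¹ • (ι (v δ) - ι (v 0)) with hw
  have h0 : Lw 0 (ι (v 0)) = lam 0 • ι (v 0) := heig 0 ⟨le_refl 0, hδbar⟩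
  have key : ∀ δ ∈ Set.Ioo (0:ℝ) δbar,
      ((lam δ - lam 0) / (δ : ℂ)) • ι (v 0)
        = Lw 0 (w δ) + (Lw δ (w δ) - Lw 0 (w δ))
          + ((δ : ℂ))⁻¹ • (Lw δ (ι (v 0)) - Lw 0 (ι (v 0))) - lam δ • w δ := by
    intro δ hδ
    have h1 : Lw δ (ι (v δ)) = lam δ • ι (v δ) := heig δ ⟨le_of_lt hδ.1, hδ.2⟩
    simp only [hw, map_smul, map_sub, h1, h0, div_eq_mul_inv]
    module
  have hC : Tendsto (fun δ => Lw δ (w δ) - Lw 0 (w δ)) (𝓝[Set.Ioo 0 δbar] 0) (𝓝 0) := by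
    refine squeeze_zero_norm' (a := fun δ => C * ‖v δ - v 0‖) ?_ ?_
    · filter_upwards [eventually_mem_nhdsWithin] with δ hδ
      have hδ0 : (0:ℝ) < δ := hδ.1
      have hι : w δ = ι (((δ : ℂ))⁻¹ • (v δ - v 0)) := by
        simp [hw, map_smul, map_sub]
      rw [hι]
      calc ‖Lw δ (ι (((δ:ℂ))⁻¹ • (v δ - v 0))) - Lw 0 (ι (((δ:ℂ))⁻¹ • (v δ - v 0)))‖
          ≤ C * δ * ‖((δ:ℂ))⁻¹ • (v δ - v 0)‖ :=
            hpert δ ⟨le_of_lt hδ0, hδ.2⟩ _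
        _ = C * ‖v δ - v 0‖ := by
            rw [norm_smul]
            have : ‖((δ:ℂ))⁻¹‖ = δ⁻¹ := by
              rw [norm_inv, Complex.norm_real, Real.norm_of_nonneg hδ0.le]
            rw [this]
            field_simp
    · have := hvconv.const_mul C
      simpa using this
  have hmain : Tendsto (fun δ => ((lam δ - lam 0) / (δ : ℂ)) • ι (v 0))
      (𝓝[Set.Ioo 0 δbar] 0) (𝓝 (Lw 0 u + 0 + z - lam 0 • u)) := by
    have hbig : Tendsto (fun δ => Lw 0 (w δ) + (Lw δ (w δ) - Lw 0 (w δ))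
          + ((δ : ℂ))⁻¹ • (Lw δ (ι (v 0)) - Lw 0 (ι (v 0))) - lam δ • w δ)
        (𝓝[Set.Ioo 0 δbar] 0) (𝓝 (Lw 0 u + 0 + z - lam 0 • u)) :=
      ((((((Lw 0).continuous.tendsto u).comp hu).add hC).add hz).sub (hlam.smul hu))
    apply hbig.congr'
    filter_upwards [eventually_mem_nhdsWithin] with δ hδ
    exact (key δ hδ).symm
  refine ⟨φ (Lw 0 u + 0 + z - lam 0 • u) / φ (ι (v 0)), ?_⟩
  have h2 := (φ.continuous.tendsto _).comp hmain
  have h3 : ∀ δ : ℝ, φ (((lam δ - lam 0) / (δ : ℂ)) • ι (v 0))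
      = ((lam δ - lam 0) / (δ : ℂ)) * φ (ι (v 0)) := by
    intro δ; rw [map_smul, smul_eq_mul]
  have h2' : Tendsto (fun δ : ℝ => ((lam δ - lam 0) / (δ : ℂ)) * φ (ι (v 0)))
      (𝓝[Set.Ioo 0 δbar] 0) (𝓝 (φ (Lw 0 u + 0 + z - lam 0 • u))) :=
    h2.congr fun δ => h3 δ
  have hne : φ (ι (v 0)) ≠ 0 := by
    rw [hφv]
    simpa using norm_ne_zero_iff.mpr hv0'
  have := h2'.div_const (φ (ι (v 0)))
  simpa [mul_div_assoc, div_self hne] using this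
end

section
/- If T_δ(x) = T₀(x) + δ Ṫ(x) + O_{C^3}(δ²) is a family of C^3 expanding maps of the circle and y_i^δ(x) denotes the i-th inverse branch of T_δ evaluated at x, then y_i^δ(x) = y_i^0(x) − δ Ṫ(y_i^0(x))/T₀'(y_i^0(x)) + O_{C^1}(δ²), where the error term F_i(δ,·) satisfies sup_{δ∈(0,δ̄)} ‖F_i(δ,·)‖_{C^1}/δ² < ∞. -/
/-- The `C^k` norm over one period `[0,1]` of a function on `ℝ`. -/
noncomputable def CnormIcc (k : ℕ) (f : ℝ → ℝ) : ℝ :=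
  ∑ j ∈ Finset.range (k + 1), ⨆ x : Set.Icc (0:ℝ) 1, |iteratedDeriv j f x.1|

open Set Function


lemma per_deriv {f : ℝ → ℝ} {c : ℝ} (h : Function.Periodic f c) :
    Function.Periodic (deriv f) c := by
  intro x
  calc deriv f (x + c) = deriv (fun t => f (t + c)) x := (deriv_comp_add_const f c x).symm
  _ = deriv f x := by rw [h.funext]

lemma per_bound {g : ℝ → ℝ} (hg : Function.Periodic g 1) {C : ℝ}
    (h : ∀ t ∈ Set.Icc (0:ℝ) 1, |g t| ≤ C) (x : ℝ) : |g x| ≤ C := by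
  have h1 : g (Int.fract x) = g x := by
    have h2 := hg.sub_int_mul_eq (x := x) (n := ⌊x⌋)
    have h3 : Int.fract x = x - (⌊x⌋ : ℝ) * 1 := by rw [Int.fract]; ring
    rw [h3]; exact h2
  rw [← h1]
  exact h _ ⟨Int.fract_nonneg x, (Int.fract_lt_one x).le⟩

lemma bdd_per {g : ℝ → ℝ} (hc : Continuous g) (hg : Function.Periodic g 1) :
    ∃ C, 0 ≤ C ∧ ∀ x, |g x| ≤ C := by
  obtain ⟨C, hC⟩ := (isCompact_Icc (a := (0:ℝ)) (b := 1)).exists_bound_of_continuousOn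
    hc.continuousOn
  refine ⟨C, le_trans (abs_nonneg (g 0)) (by simpa using hC 0 (by norm_num)), ?_⟩
  exact per_bound hg fun t ht => by simpa using hC t ht

lemma ciSup_icc_le {g : ℝ → ℝ} {C : ℝ} (h : ∀ t ∈ Set.Icc (0:ℝ) 1, |g t| ≤ C) :
    (⨆ x : Set.Icc (0:ℝ) 1, |g x.1|) ≤ C := by
  haveI : Nonempty (Set.Icc (0:ℝ) 1) := ⟨⟨0, by norm_num⟩⟩
  exact ciSup_le fun t => h t t.2

lemma le_ciSup_icc {g : ℝ → ℝ} (hg : Continuous g) {t : ℝ} (ht : t ∈ Set.Icc (0:ℝ) 1) :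
    |g t| ≤ ⨆ x : Set.Icc (0:ℝ) 1, |g x.1| := by
  have hb : BddAbove (Set.range fun x : Set.Icc (0:ℝ) 1 => |g x.1|) := by
    have he : (Set.range fun x : Set.Icc (0:ℝ) 1 => |g x.1|)
        = (fun t => |g t|) '' Set.Icc 0 1 := by
      ext z
      constructor
      · rintro ⟨w, rfl⟩; exact ⟨w.1, w.2, rfl⟩
      · rintro ⟨s, hs, rfl⟩; exact ⟨⟨s, hs⟩, rfl⟩
    rw [he]
    exact (isCompact_Icc.image hg.abs).bddAbove
  exact le_ciSup hb ⟨t, ht⟩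

lemma CnormIcc_term_le (k j : ℕ) (hj : j ≤ k) (f : ℝ → ℝ) :
    (⨆ x : Set.Icc (0:ℝ) 1, |iteratedDeriv j f x.1|) ≤ CnormIcc k f :=
  Finset.single_le_sum (f := fun j => ⨆ x : Set.Icc (0:ℝ) 1, |iteratedDeriv j f x.1|)
    (fun _ _ => Real.iSup_nonneg fun _ => abs_nonneg _) (Finset.mem_range.2 (Nat.lt_succ_of_le hj))

lemma lip_global {f : ℝ → ℝ} (hf : Differentiable ℝ f) {C : ℝ} (h : ∀ t, |deriv f t| ≤ C)
    (u v : ℝ) : |f u - f v| ≤ C * |u - v| := by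
  have h2 := (convex_univ (𝕜 := ℝ) (E := ℝ)).norm_image_sub_le_of_norm_deriv_le
    (fun t _ => hf t) (fun t _ => by rw [Real.norm_eq_abs]; exact h t)
    (Set.mem_univ v) (Set.mem_univ u)
  simpa [Real.norm_eq_abs] using h2

lemma lip_uIcc {f : ℝ → ℝ} (hf : Differentiable ℝ f) {C : ℝ} {u v : ℝ}
    (h : ∀ t ∈ Set.uIcc v u, |deriv f t| ≤ C) : |f u - f v| ≤ C * |u - v| := by
  have h2 := (convex_uIcc v u).norm_image_sub_le_of_norm_deriv_le
    (fun t _ => hf t) (fun t ht => by rw [Real.norm_eq_abs]; exact h t ht)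
    Set.left_mem_uIcc Set.right_mem_uIcc
  simpa [Real.norm_eq_abs] using h2

lemma taylor_bound {f : ℝ → ℝ} (hf : Differentiable ℝ f) (hf' : Differentiable ℝ (deriv f))
    {M : ℝ} (hM : ∀ t, |deriv (deriv f) t| ≤ M) (u v : ℝ) :
    |f u - f v - deriv f v * (u - v)| ≤ M * (u - v) ^ 2 := by
  have hM0 : 0 ≤ M := le_trans (abs_nonneg _) (hM 0)
  have hgd : Differentiable ℝ (fun t => f t - deriv f v * t) := by fun_prop
  have hgderiv : ∀ t, deriv (fun t => f t - deriv f v * t) t = deriv f t - deriv f v := by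
    intro t
    have h3 := ((hf t).hasDerivAt.sub ((hasDerivAt_id t).const_mul (deriv f v))).deriv
    simp only [id_eq, mul_one] at h3; exact h3
  have key : ∀ t ∈ Set.uIcc v u, |deriv (fun t => f t - deriv f v * t) t| ≤ M * |u - v| := by
    intro t ht
    rw [hgderiv t]
    have h1 : |deriv f t - deriv f v| ≤ M * |t - v| := lip_global hf' hM t v
    have h2 : |t - v| ≤ |u - v| := by
      have l1 := le_abs_self (u - v)
      have l2 := neg_abs_le (u - v)
      rcases Set.mem_uIcc.mp ht with ⟨h3, h4⟩ | ⟨h3, h4⟩ <;> rw [abs_le] <;>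
        constructor <;> linarith
    exact le_trans h1 (mul_le_mul_of_nonneg_left h2 hM0)
  have h4 := lip_uIcc hgd key
  have e : (fun t => f t - deriv f v * t) u - (fun t => f t - deriv f v * t) v
      = f u - f v - deriv f v * (u - v) := by ring
  rw [e] at h4
  calc |f u - f v - deriv f v * (u - v)| ≤ M * |u - v| * |u - v| := h4
  _ = M * (u - v) ^ 2 := by rw [mul_assoc, ← abs_mul, ← sq, abs_of_nonneg (sq_nonneg _)]

lemma expand_lower {f : ℝ → ℝ} (hf : Differentiable ℝ f) {N : ℝ} (hN : 0 ≤ N)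
    (h : ∀ t, N ≤ deriv f t) (u v : ℝ) : N * |u - v| ≤ |f u - f v| := by
  have mono : Monotone (fun t => f t - N * t) := by
    have hd : Differentiable ℝ (fun t => f t - N * t) := by fun_prop
    apply monotone_of_deriv_nonneg hd
    intro t
    have h3 := ((hf t).hasDerivAt.sub ((hasDerivAt_id t).const_mul N)).deriv
    have h4 : deriv (fun t => f t - N * t) t = deriv f t - N := by
      simp only [id_eq, mul_one] at h3; exact h3
    rw [h4]
    linarith [h t]
  have key : ∀ a b : ℝ, a ≤ b → N * (b - a) ≤ f b - f a := by
    intro a b hab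
    have h5 := mono hab
    simp only [] at h5
    nlinarith [h5]
  rcases le_total v u with hvu | hvu
  · have h6 := key v u hvu
    have h0 : 0 ≤ f u - f v := le_trans (mul_nonneg hN (by linarith)) h6
    rw [abs_of_nonneg (sub_nonneg.2 hvu), abs_of_nonneg h0]
    exact h6
  · have h6 := key u v hvu
    have h0 : 0 ≤ f v - f u := le_trans (mul_nonneg hN (by linarith)) h6
    rw [abs_sub_comm u v, abs_sub_comm (f u) (f v),
      abs_of_nonneg (sub_nonneg.2 hvu), abs_of_nonneg h0]
    exact h6

lemma abs_triple (X Y Z : ℝ) : |X - Y - Z| ≤ |X| + |Y| + |Z| := by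
  have h := (abs_add_le (X + -Y) (-Z)).trans (add_le_add_left (abs_add_le X (-Y)) _)
  simpa [sub_eq_add_neg, abs_neg] using h

lemma abs_quad (W X Y Z : ℝ) : |(-W) - X - Y - Z| ≤ |W| + |X| + |Y| + |Z| := by
  have h := (abs_add_le ((-W) - X - Y) (-Z)).trans (add_le_add_left
    ((abs_add_le ((-W) - X) (-Y)).trans (add_le_add_left (abs_add_le (-W) (-X)) _)) _)
  simpa [sub_eq_add_neg, abs_neg] using h

lemma step1 {p r δ u ub Eb tay CE K1 M2 C1 : ℝ}
    (hδ0 : 0 < δ) (hp1 : 1 ≤ p)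
    (hkey : p * (r + δ * u / p) = -(δ * (ub - u)) - Eb - tay)
    (hub : |ub - u| ≤ K1 * |r|)
    (hr : |r| ≤ C1 * δ)
    (hEb : |Eb| ≤ CE * δ ^ 2)
    (htay : |tay| ≤ M2 * r ^ 2)
    (hK1 : 0 ≤ K1) (hM2 : 0 ≤ M2) (hC1 : 0 ≤ C1) :
    |r + δ * u / p| ≤ (K1 * C1 + CE + M2 * C1 ^ 2) * δ ^ 2 := by
  have h1 : |p * (r + δ * u / p)| ≤ (K1 * C1 + CE + M2 * C1 ^ 2) * δ ^ 2 := by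
    rw [hkey]
    have t1 := abs_triple (-(δ * (ub - u))) Eb tay
    have h2 : |(-(δ * (ub - u)))| ≤ δ * (K1 * (C1 * δ)) := by
      rw [abs_neg, abs_mul, abs_of_pos hδ0]
      exact mul_le_mul_of_nonneg_left (hub.trans (mul_le_mul_of_nonneg_left hr hK1)) hδ0.le
    have h3 : M2 * r ^ 2 ≤ M2 * (C1 * δ) ^ 2 := by
      apply mul_le_mul_of_nonneg_left _ hM2
      nlinarith [abs_nonneg r, sq_abs r]
    nlinarith [htay, hEb]
  have h4 : |p * (r + δ * u / p)| = p * |r + δ * u / p| := by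
    rw [abs_mul, abs_of_pos (by linarith : (0:ℝ) < p)]
  nlinarith [abs_nonneg (r + δ * u / p), h1, h4,
    mul_le_mul_of_nonneg_right hp1 (abs_nonneg (r + δ * u / p))]

set_option maxHeartbeats 1600000 in
lemma step2 {p q u u1 p2 Pb Td1b r δ epv CE M2 M3 K0 K1 K2 C0 C1 δbar : ℝ}
    (hδ0 : 0 < δ) (hδb : δ < δbar)
    (hp1 : 1 ≤ p) (hq1 : 1 ≤ q)
    (hq_eq : q = epv + Pb + δ * Td1b)
    (hep : |epv| ≤ CE * δ ^ 2)
    (he2 : |Pb - p - p2 * r| ≤ M3 * r ^ 2)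
    (he3 : |Td1b - u1| ≤ K2 * |r|)
    (hr : |r| ≤ C1 * δ)
    (hF0 : |r + δ * u / p| ≤ C0 * δ ^ 2)
    (hu : |u| ≤ K0) (hu1 : |u1| ≤ K1) (hp2 : |p2| ≤ M2)
    (hM2 : 0 ≤ M2) (hM3 : 0 ≤ M3) (hK2 : 0 ≤ K2) (hK0 : 0 ≤ K0) (hK1 : 0 ≤ K1)
    (hC0 : 0 ≤ C0) (hC1 : 0 ≤ C1) (hCE : 0 ≤ CE) :
    |1 / q - (1 / p - (δ * (u1 * (1 / p)) * p - δ * u * (p2 * (1 / p))) / p ^ 2)|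
      ≤ ((M2 * K0 + K1) * ((M2 * K0 + K1) + (CE + M3 * C1 ^ 2 + K2 * C1 + M2 * C0) * δbar)
         + (CE + M3 * C1 ^ 2 + K2 * C1 + M2 * C0)) * δ ^ 2 := by
  have hp0 : p ≠ 0 := by linarith
  have hq0 : q ≠ 0 := by linarith
  obtain ⟨G, hGdef⟩ : ∃ G : ℝ, G = p2 * u / p - u1 := ⟨_, rfl⟩
  obtain ⟨e, hedef⟩ : ∃ e : ℝ,
    e = -epv - (Pb - p - p2 * r) - δ * (Td1b - u1) - p2 * (r + δ * u / p) := ⟨_, rfl⟩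
  obtain ⟨Ce, hCedef⟩ : ∃ Ce : ℝ, Ce = CE + M3 * C1 ^ 2 + K2 * C1 + M2 * C0 := ⟨_, rfl⟩
  rw [← hCedef]
  -- the exact identity
  have he_eq : e = (p - q) - δ * G := by rw [hedef, hGdef, hq_eq]; field_simp; ring
  have hid : 1 / q - (1 / p - (δ * (u1 * (1 / p)) * p - δ * u * (p2 * (1 / p))) / p ^ 2)
      = δ * G * (p - q) / (p ^ 2 * q) + e / (p * q) := by
    rw [he_eq, hGdef]; field_simp; ring
  -- bound on G
  have hpabs : |p| = p := abs_of_pos (by linarith)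
  have hG : |G| ≤ M2 * K0 + K1 := by
    have h1 : |p2 * u / p| ≤ M2 * K0 := by
      rw [abs_div, abs_mul, hpabs]
      calc |p2| * |u| / p ≤ |p2| * |u| := by
            apply div_le_self (by positivity) hp1
      _ ≤ M2 * K0 := mul_le_mul hp2 hu (abs_nonneg _) hM2
    calc |G| ≤ |p2 * u / p| + |u1| := by
          rw [hGdef]
          exact (abs_sub _ _)
    _ ≤ M2 * K0 + K1 := add_le_add h1 hu1
  -- bound on e
  have hev : |e| ≤ Ce * δ ^ 2 := by
    have h1 : |e| ≤ |epv| + |Pb - p - p2 * r| + |δ * (Td1b - u1)| + |p2 * (r + δ * u / p)| := by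
      rw [hedef]
      exact abs_quad _ _ _ _
    have h2 : |δ * (Td1b - u1)| ≤ δ * (K2 * (C1 * δ)) := by
      rw [abs_mul, abs_of_pos hδ0]
      apply mul_le_mul_of_nonneg_left _ hδ0.le
      exact he3.trans (mul_le_mul_of_nonneg_left hr hK2)
    have h3 : |p2 * (r + δ * u / p)| ≤ M2 * (C0 * δ ^ 2) := by
      rw [abs_mul]
      exact mul_le_mul hp2 hF0 (abs_nonneg _) hM2
    have h4 : M3 * r ^ 2 ≤ M3 * (C1 * δ) ^ 2 := by
      apply mul_le_mul_of_nonneg_left _ hM3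
      nlinarith [abs_nonneg r, sq_abs r]
    rw [hCedef]
    nlinarith [he2]
  -- bound on p - q
  have hpq_eq : p - q = δ * G + e := by rw [he_eq]; ring
  have hpq : |p - q| ≤ δ * ((M2 * K0 + K1) + Ce * δbar) := by
    rw [hpq_eq]
    calc |δ * G + e| ≤ |δ * G| + |e| := abs_add_le _ _
    _ ≤ δ * (M2 * K0 + K1) + Ce * δ ^ 2 := by
        rw [abs_mul, abs_of_pos hδ0]
        exact add_le_add (mul_le_mul_of_nonneg_left hG hδ0.le) hev
    _ ≤ δ * ((M2 * K0 + K1) + Ce * δbar) := by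
        have hCe0 : 0 ≤ Ce := by rw [hCedef]; positivity
        have hδδ : δ ^ 2 ≤ δbar * δ := by nlinarith
        nlinarith [mul_le_mul_of_nonneg_left hδδ hCe0]
  -- final
  rw [hid]
  have hq_pos : 0 < q := by linarith
  have hp_pos : 0 < p := by linarith
  have hd1 : (1:ℝ) ≤ p ^ 2 * q := by nlinarith
  have hd2 : (1:ℝ) ≤ p * q := by nlinarith
  have hCe0 : 0 ≤ Ce := by rw [hCedef]; positivity
  calc |δ * G * (p - q) / (p ^ 2 * q) + e / (p * q)|
      ≤ |δ * G * (p - q) / (p ^ 2 * q)| + |e / (p * q)| := abs_add_le _ _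
  _ ≤ |δ * G * (p - q)| + |e| := by
      apply add_le_add
      · rw [abs_div, abs_of_pos (by nlinarith : (0:ℝ) < p ^ 2 * q)]
        exact div_le_self (abs_nonneg _) hd1
      · rw [abs_div, abs_of_pos (by nlinarith : (0:ℝ) < p * q)]
        exact div_le_self (abs_nonneg _) hd2
  _ ≤ (M2 * K0 + K1) * ((M2 * K0 + K1) + Ce * δbar) * δ ^ 2 + Ce * δ ^ 2 := by
      have h5 : |δ * G * (p - q)| = δ * |G| * |p - q| := by
        rw [abs_mul, abs_mul, abs_of_pos hδ0]
      rw [h5]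
      have h6 : δ * |G| * |p - q| ≤ δ * (M2 * K0 + K1) * (δ * ((M2 * K0 + K1) + Ce * δbar)) := by
        apply mul_le_mul (mul_le_mul_of_nonneg_left hG hδ0.le) hpq (abs_nonneg _) (by positivity)
      nlinarith
  _ = ((M2 * K0 + K1) * ((M2 * K0 + K1) + Ce * δbar) + Ce) * δ ^ 2 := by ring

set_option maxHeartbeats 1600000 in
/-- First-order expansion of inverse branches: if `T_δ = T₀ + δ Ṫ + O_{C³}(δ²)` is a
family of `C³` expanding circle maps and `y δ` is a (continuously chosen) inverse
branch of `T_δ`, then `y δ = y 0 - δ Ṫ(y 0)/T₀'(y 0) + O_{C¹}(δ²)`, i.e. the error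
is bounded in `C¹` norm by a constant times `δ²`, uniformly in `δ ∈ (0, δ̄)`. -/
theorem inverse_branch_expansion
    (δbar N : ℝ) (hδbar : 0 < δbar) (hN : 1 < N) (d : ℕ) (hd : 0 < d)
    (Tf : ℝ → ℝ → ℝ) (Tdot : ℝ → ℝ)
    (hTdot : ContDiff ℝ 3 Tdot) (hTdotper : Function.Periodic Tdot 1)
    (hreg : ∀ δ ∈ Set.Ico (0:ℝ) δbar,
      ContDiff ℝ 3 (Tf δ) ∧ (∀ x, Tf δ (x + 1) = Tf δ x + d) ∧ ∀ x, N ≤ deriv (Tf δ) x)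
    (CE : ℝ)
    (hE : ∀ δ ∈ Set.Ioo (0:ℝ) δbar,
      CnormIcc 3 (fun x => Tf δ x - Tf 0 x - δ * Tdot x) ≤ CE * δ ^ 2)
    (y : ℝ → ℝ → ℝ)
    (hy : ∀ δ ∈ Set.Ico (0:ℝ) δbar, ∀ x, Tf δ (y δ x) = x)
    (hyC1 : ∀ δ ∈ Set.Ico (0:ℝ) δbar, ContDiff ℝ 1 (y δ))
    (hycont : ∀ x, ContinuousOn (fun δ => y δ x) (Set.Ico 0 δbar)) :
    ∃ Cc : ℝ, ∀ δ ∈ Set.Ioo (0:ℝ) δbar,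
      CnormIcc 1 (fun x => y δ x - (y 0 x - δ * Tdot (y 0 x) / deriv (Tf 0) (y 0 x)))
        ≤ Cc * δ ^ 2 := by
  obtain ⟨hT0, hT0per, hT0lb⟩ := hreg 0 ⟨le_refl 0, hδbar⟩
  have hN0 : (0:ℝ) < N := lt_trans one_pos hN
  have hT0d : Differentiable ℝ (Tf 0) := hT0.differentiable (by norm_num)
  have hPd : Differentiable ℝ (deriv (Tf 0)) := by
    have h := hT0.differentiable_iteratedDeriv 1 (by norm_num)
    rwa [iteratedDeriv_one] at h
  have hP2d : Differentiable ℝ (deriv (deriv (Tf 0))) := by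
    have h := hT0.differentiable_iteratedDeriv 2 (by norm_num)
    rwa [iteratedDeriv_succ, iteratedDeriv_one] at h
  have hP3c : Continuous (deriv (deriv (deriv (Tf 0)))) := by
    have h := hT0.continuous_iteratedDeriv 3 (by norm_num)
    rwa [iteratedDeriv_succ, iteratedDeriv_succ, iteratedDeriv_one] at h
  have hPper : Function.Periodic (deriv (Tf 0)) 1 := by
    intro t
    calc deriv (Tf 0) (t + 1) = deriv (fun s => Tf 0 (s + 1)) t :=
          (deriv_comp_add_const _ 1 t).symm
    _ = deriv (fun s => Tf 0 s + (d : ℝ)) t := by congr 1; funext s; rw [hT0per s]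
    _ = deriv (Tf 0) t := by rw [deriv_add_const]
  have hP2per := per_deriv hPper
  have hP3per := per_deriv hP2per
  have hTdotd : Differentiable ℝ Tdot := hTdot.differentiable (by norm_num)
  have hTd1d : Differentiable ℝ (deriv Tdot) := by
    have h := hTdot.differentiable_iteratedDeriv 1 (by norm_num)
    rwa [iteratedDeriv_one] at h
  have hTd2c : Continuous (deriv (deriv Tdot)) := by
    have h := hTdot.continuous_iteratedDeriv 2 (by norm_num)
    rwa [iteratedDeriv_succ, iteratedDeriv_one] at h
  have hTd1per := per_deriv hTdotper
  have hTd2per := per_deriv hTd1per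
  -- global constants
  obtain ⟨K0, hK00, hK0⟩ := bdd_per hTdot.continuous hTdotper
  obtain ⟨K1, hK10, hK1⟩ := bdd_per hTd1d.continuous hTd1per
  obtain ⟨K2, hK20, hK2⟩ := bdd_per hTd2c hTd2per
  obtain ⟨M2, hM20, hM2⟩ := bdd_per hP2d.continuous hP2per
  obtain ⟨M3, hM30, hM3⟩ := bdd_per hP3c hP3per
  have hCE0 : 0 ≤ CE := by
    have h1 := hE (δbar / 2) ⟨by linarith, by linarith⟩
    have h2 : 0 ≤ CnormIcc 3 (fun x => Tf (δbar / 2) x - Tf 0 x - δbar / 2 * Tdot x) :=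
      Finset.sum_nonneg fun j _ => Real.iSup_nonneg fun x => abs_nonneg _
    have h3 : 0 < (δbar / 2) ^ 2 := by positivity
    nlinarith [h1, h2, h3]
  obtain ⟨C1, hC1def⟩ : ∃ C1 : ℝ, C1 = K0 + CE * δbar := ⟨_, rfl⟩
  have hC10 : 0 ≤ C1 := by
    rw [hC1def]; have := mul_nonneg hCE0 hδbar.le; linarith
  obtain ⟨C0, hC0def⟩ : ∃ C0 : ℝ, C0 = K1 * C1 + CE + M2 * C1 ^ 2 := ⟨_, rfl⟩
  have hC00 : 0 ≤ C0 := by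
    rw [hC0def]
    have := mul_nonneg hK10 hC10
    have := mul_nonneg hM20 (sq_nonneg C1)
    linarith
  obtain ⟨Cd, hCddef⟩ : ∃ Cd : ℝ, Cd =
      (M2 * K0 + K1) * ((M2 * K0 + K1) + (CE + M3 * C1 ^ 2 + K2 * C1 + M2 * C0) * δbar)
        + (CE + M3 * C1 ^ 2 + K2 * C1 + M2 * C0) := ⟨_, rfl⟩
  refine ⟨C0 + Cd, ?_⟩
  rintro δ ⟨hδ0, hδb⟩
  have hδico : δ ∈ Set.Ico (0:ℝ) δbar := ⟨hδ0.le, hδb⟩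
  obtain ⟨hTδ, hTδper, hTδlb⟩ := hreg δ hδico
  have hTδd : Differentiable ℝ (Tf δ) := hTδ.differentiable (by norm_num)
  have hyδd : Differentiable ℝ (y δ) := (hyC1 δ hδico).differentiable (by norm_num)
  have hy0d : Differentiable ℝ (y 0) := (hyC1 0 ⟨le_refl 0, hδbar⟩).differentiable (by norm_num)
  -- the perturbation E and its bounds
  obtain ⟨E, hEdef⟩ : ∃ E : ℝ → ℝ, E = fun t => Tf δ t - Tf 0 t - δ * Tdot t := ⟨_, rfl⟩
  have hEval : ∀ t, E t = Tf δ t - Tf 0 t - δ * Tdot t := fun t => by rw [hEdef]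
  have hEc3 : ContDiff ℝ 3 E := by
    rw [hEdef]; exact (hTδ.sub hT0).sub (contDiff_const.mul hTdot)
  have hEper : Function.Periodic E 1 := by
    intro t
    rw [hEval, hEval, hTδper t, hT0per t, hTdotper t]
    ring
  have hEderiv : ∀ t, deriv E t = deriv (Tf δ) t - deriv (Tf 0) t - δ * deriv Tdot t := by
    intro t
    rw [hEdef]
    exact (((hTδd t).hasDerivAt.sub (hT0d t).hasDerivAt).sub
      ((hTdotd t).hasDerivAt.const_mul δ)).deriv
  have hEcont : Continuous E := hEc3.continuous
  have hEdc : Continuous (deriv E) := by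
    have h := hEc3.continuous_iteratedDeriv 1 (by norm_num)
    rwa [iteratedDeriv_one] at h
  have hECn : CnormIcc 3 E ≤ CE * δ ^ 2 := by
    have h := hE δ ⟨hδ0, hδb⟩
    rw [← hEdef] at h
    exact h
  have hEbd : ∀ t, |E t| ≤ CE * δ ^ 2 := by
    apply per_bound hEper
    intro t ht
    have h1 : |E t| = |iteratedDeriv 0 E t| := by rw [iteratedDeriv_zero]
    rw [h1]
    exact le_trans (le_trans (le_ciSup_icc (by rw [iteratedDeriv_zero]; exact hEcont) ht)
      (CnormIcc_term_le 3 0 (by norm_num) E)) hECn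
  have hEdb : ∀ t, |deriv E t| ≤ CE * δ ^ 2 := by
    apply per_bound (per_deriv hEper)
    intro t ht
    have h1 : |deriv E t| = |iteratedDeriv 1 E t| := by rw [iteratedDeriv_one]
    rw [h1]
    exact le_trans (le_trans (le_ciSup_icc (by rw [iteratedDeriv_one]; exact hEdc) ht)
      (CnormIcc_term_le 3 1 (by norm_num) E)) hECn
  -- derivatives of the inverse branches
  have hyδder : ∀ t, deriv (y δ) t = 1 / deriv (Tf δ) (y δ t) := by
    intro t
    have hcomp : HasDerivAt (fun s => Tf δ (y δ s)) (deriv (Tf δ) (y δ t) * deriv (y δ) t) t :=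
      (hTδd (y δ t)).hasDerivAt.comp t (hyδd t).hasDerivAt
    have hid : (fun s => Tf δ (y δ s)) = id := funext (hy δ hδico)
    rw [hid] at hcomp
    have h1 : deriv (Tf δ) (y δ t) * deriv (y δ) t = 1 := hcomp.unique (hasDerivAt_id t)
    have h2 : deriv (Tf δ) (y δ t) ≠ 0 := by have := hTδlb (y δ t); intro h; rw [h] at this; linarith
    field_simp
    linarith [h1]
  have hy0der : ∀ t, deriv (y 0) t = 1 / deriv (Tf 0) (y 0 t) := by
    intro t
    have hcomp : HasDerivAt (fun s => Tf 0 (y 0 s)) (deriv (Tf 0) (y 0 t) * deriv (y 0) t) t :=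
      (hT0d (y 0 t)).hasDerivAt.comp t (hy0d t).hasDerivAt
    have hid : (fun s => Tf 0 (y 0 s)) = id := funext (hy 0 ⟨le_refl 0, hδbar⟩)
    rw [hid] at hcomp
    have h1 : deriv (Tf 0) (y 0 t) * deriv (y 0) t = 1 := hcomp.unique (hasDerivAt_id t)
    have h2 : deriv (Tf 0) (y 0 t) ≠ 0 := by have := hT0lb (y 0 t); intro h; rw [h] at this; linarith
    field_simp
    linarith [h1]
  -- pointwise estimates
  have key : ∀ x : ℝ,
      |y δ x - (y 0 x - δ * Tdot (y 0 x) / deriv (Tf 0) (y 0 x))| ≤ C0 * δ ^ 2 ∧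
      |deriv (fun s => y δ s - (y 0 s - δ * Tdot (y 0 s) / deriv (Tf 0) (y 0 s))) x|
        ≤ Cd * δ ^ 2 := by
    intro x
    have hpb : N ≤ deriv (Tf 0) (y 0 x) := hT0lb _
    have hqb : N ≤ deriv (Tf δ) (y δ x) := hTδlb _
    have hp1 : 1 ≤ deriv (Tf 0) (y 0 x) := le_trans hN.le hpb
    have hq1 : 1 ≤ deriv (Tf δ) (y δ x) := le_trans hN.le hqb
    have hp0 : deriv (Tf 0) (y 0 x) ≠ 0 := by intro h; rw [h] at hp1; linarith
    have hTa : Tf 0 (y 0 x) = x := hy 0 ⟨le_refl 0, hδbar⟩ x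
    have hTb : Tf δ (y δ x) = x := hy δ hδico x
    have hT0b : Tf 0 (y δ x) = x - δ * Tdot (y δ x) - E (y δ x) := by
      have h1 := hEval (y δ x)
      rw [hTb] at h1
      linarith
    -- step 0 : crude bound on r = yδ - y0
    have hr : |y δ x - y 0 x| ≤ C1 * δ := by
      have h1 : N * |y δ x - y 0 x| ≤ |Tf 0 (y δ x) - Tf 0 (y 0 x)| :=
        expand_lower hT0d hN0.le hT0lb _ _
      have h2 : Tf 0 (y δ x) - Tf 0 (y 0 x) = -(δ * Tdot (y δ x) + E (y δ x)) := by
        rw [hT0b, hTa]; ring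
      rw [h2, abs_neg] at h1
      have h3 : |δ * Tdot (y δ x) + E (y δ x)| ≤ δ * K0 + CE * δ ^ 2 := by
        calc |δ * Tdot (y δ x) + E (y δ x)|
            ≤ |δ * Tdot (y δ x)| + |E (y δ x)| := abs_add_le _ _
        _ ≤ δ * K0 + CE * δ ^ 2 := by
            rw [abs_mul, abs_of_pos hδ0]
            exact add_le_add (mul_le_mul_of_nonneg_left (hK0 _) hδ0.le) (hEbd _)
      have h4 : |y δ x - y 0 x| ≤ N * |y δ x - y 0 x| := by
        nlinarith [abs_nonneg (y δ x - y 0 x),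
          mul_le_mul_of_nonneg_right hN.le (abs_nonneg (y δ x - y 0 x))]
      have hδδ : δ * δ ≤ δbar * δ := mul_le_mul_of_nonneg_right hδb.le hδ0.le
      have h5 : CE * δ ^ 2 ≤ CE * (δbar * δ) := by
        nlinarith [mul_le_mul_of_nonneg_left hδδ hCE0]
      rw [hC1def]
      nlinarith [h1, h3, h4, h5]
    -- step 1 : first-order estimate
    obtain ⟨tay, htaydef⟩ : ∃ t : ℝ, t = Tf 0 (y δ x) - Tf 0 (y 0 x)
        - deriv (Tf 0) (y 0 x) * (y δ x - y 0 x) := ⟨_, rfl⟩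
    have htay : |tay| ≤ M2 * (y δ x - y 0 x) ^ 2 := by
      rw [htaydef]
      exact taylor_bound hT0d hPd hM2 (y δ x) (y 0 x)
    have hkey : deriv (Tf 0) (y 0 x)
        * ((y δ x - y 0 x) + δ * Tdot (y 0 x) / deriv (Tf 0) (y 0 x))
        = -(δ * (Tdot (y δ x) - Tdot (y 0 x))) - E (y δ x) - tay := by
      rw [htaydef, hT0b, hTa]
      field_simp
      ring
    have hub : |Tdot (y δ x) - Tdot (y 0 x)| ≤ K1 * |y δ x - y 0 x| :=
      lip_global hTdotd hK1 _ _
    have hF0 : |(y δ x - y 0 x) + δ * Tdot (y 0 x) / deriv (Tf 0) (y 0 x)| ≤ C0 * δ ^ 2 := by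
      rw [hC0def]
      exact step1 hδ0 hp1 hkey hub hr (hEbd _) htay hK10 hM20 hC10
    constructor
    · have heq : y δ x - (y 0 x - δ * Tdot (y 0 x) / deriv (Tf 0) (y 0 x))
          = (y δ x - y 0 x) + δ * Tdot (y 0 x) / deriv (Tf 0) (y 0 x) := by ring
      rw [heq]
      exact hF0
    -- step 2 : derivative estimate
    · have hy0' : HasDerivAt (y 0) (1 / deriv (Tf 0) (y 0 x)) x := by
        have h1 := (hy0d x).hasDerivAt
        rwa [hy0der x] at h1
      have hyδ' : HasDerivAt (y δ) (1 / deriv (Tf δ) (y δ x)) x := by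
        have h1 := (hyδd x).hasDerivAt
        rwa [hyδder x] at h1
      have hu' : HasDerivAt (fun s => Tdot (y 0 s))
          (deriv Tdot (y 0 x) * (1 / deriv (Tf 0) (y 0 x))) x :=
        (hTdotd (y 0 x)).hasDerivAt.comp x hy0'
      have hpc : HasDerivAt (fun s => deriv (Tf 0) (y 0 s))
          (deriv (deriv (Tf 0)) (y 0 x) * (1 / deriv (Tf 0) (y 0 x))) x :=
        (hPd (y 0 x)).hasDerivAt.comp x hy0'
      have hquot : HasDerivAt (fun s => δ * Tdot (y 0 s) / deriv (Tf 0) (y 0 s))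
          ((δ * (deriv Tdot (y 0 x) * (1 / deriv (Tf 0) (y 0 x))) * deriv (Tf 0) (y 0 x)
            - δ * Tdot (y 0 x) * (deriv (deriv (Tf 0)) (y 0 x) * (1 / deriv (Tf 0) (y 0 x))))
            / deriv (Tf 0) (y 0 x) ^ 2) x :=
        (hu'.const_mul δ).div hpc hp0
      have hF' : HasDerivAt (fun s => y δ s - (y 0 s - δ * Tdot (y 0 s) / deriv (Tf 0) (y 0 s)))
          (1 / deriv (Tf δ) (y δ x) - (1 / deriv (Tf 0) (y 0 x)
            - (δ * (deriv Tdot (y 0 x) * (1 / deriv (Tf 0) (y 0 x))) * deriv (Tf 0) (y 0 x)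
              - δ * Tdot (y 0 x) * (deriv (deriv (Tf 0)) (y 0 x) * (1 / deriv (Tf 0) (y 0 x))))
              / deriv (Tf 0) (y 0 x) ^ 2)) x :=
        hyδ'.sub (hy0'.sub hquot)
      rw [hF'.deriv]
      have hq_eq : deriv (Tf δ) (y δ x)
          = deriv E (y δ x) + deriv (Tf 0) (y δ x) + δ * deriv Tdot (y δ x) := by
        rw [hEderiv]; ring
      have he2 : |deriv (Tf 0) (y δ x) - deriv (Tf 0) (y 0 x)
          - deriv (deriv (Tf 0)) (y 0 x) * (y δ x - y 0 x)| ≤ M3 * (y δ x - y 0 x) ^ 2 :=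
        taylor_bound hPd hP2d hM3 (y δ x) (y 0 x)
      have he3 : |deriv Tdot (y δ x) - deriv Tdot (y 0 x)| ≤ K2 * |y δ x - y 0 x| :=
        lip_global hTd1d hK2 _ _
      rw [hCddef]
      exact step2 hδ0 hδb hp1 hq1 hq_eq (hEdb _) he2 he3 hr hF0
        (hK0 _) (hK1 _) (hM2 _) hM20 hM30 hK20 hK00 hK10 hC00 hC10 hCE0
  -- assemble the C¹ norm bound
  have hsum : CnormIcc 1 (fun x => y δ x - (y 0 x - δ * Tdot (y 0 x) / deriv (Tf 0) (y 0 x)))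
      = (⨆ x : Set.Icc (0:ℝ) 1, |iteratedDeriv 0
          (fun s => y δ s - (y 0 s - δ * Tdot (y 0 s) / deriv (Tf 0) (y 0 s))) x.1|)
        + (⨆ x : Set.Icc (0:ℝ) 1, |iteratedDeriv 1
          (fun s => y δ s - (y 0 s - δ * Tdot (y 0 s) / deriv (Tf 0) (y 0 s))) x.1|) := by
    rw [CnormIcc, Finset.sum_range_succ, Finset.sum_range_succ, Finset.sum_range_zero, zero_add]
  rw [hsum]
  have hs0 : (⨆ x : Set.Icc (0:ℝ) 1, |iteratedDeriv 0
      (fun s => y δ s - (y 0 s - δ * Tdot (y 0 s) / deriv (Tf 0) (y 0 s))) x.1|)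
      ≤ C0 * δ ^ 2 := by
    apply ciSup_icc_le
    intro t ht
    rw [iteratedDeriv_zero]
    exact (key t).1
  have hs1 : (⨆ x : Set.Icc (0:ℝ) 1, |iteratedDeriv 1
      (fun s => y δ s - (y 0 s - δ * Tdot (y 0 s) / deriv (Tf 0) (y 0 s))) x.1|)
      ≤ Cd * δ ^ 2 := by
    apply ciSup_icc_le
    intro t ht
    rw [iteratedDeriv_one]
    exact (key t).2
  calc _ ≤ C0 * δ ^ 2 + Cd * δ ^ 2 := add_le_add hs0 hs1
  _ = (C0 + Cd) * δ ^ 2 := by ring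
end
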